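/- Let Φ be a unital positive linear map and 0 < m ≤ B ≤ m' < M' ≤ A ≤ M. Then for each ν ∈ [0,1], Φ((1−ν)A + νB)² ≤ (K(h)/K(h')^r)² · (Φ(A) #_ν Φ(B))², with r = min{ν,1−ν}, h = M/m, h' = M'/m'. -/

import Mathlib

open scoped NNReal

/-- The Kantorovich constant. -/
noncomputable def Kc (x : ℝ) : ℝ := (x + 1) ^ 2 / (4 * x)

/-- The weighted operator geometric mean `A #_ν B`. -/
noncomputable def sharp {𝒜 : Type*} [CStarAlgebra 𝒜] [PartialOrder 𝒜] [StarOrderedRing 𝒜] (ν : ℝ) (a b : 𝒜) : 𝒜 :=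
  CFC.rpow a (1/2) * CFC.rpow (CFC.rpow a (-(1/2)) * b * CFC.rpow a (-(1/2))) ν * CFC.rpow a (1/2)

section ScalarLemmas

lemma Kc_pos {x : ℝ} (hx : 0 < x) : 0 < Kc x := by
  unfold Kc; positivity

lemma Kc_mono {x y : ℝ} (h1 : 1 ≤ x) (hxy : x ≤ y) : Kc x ≤ Kc y := by
  unfold Kc
  have hx : 0 < x := lt_of_lt_of_le one_pos h1
  have hy : 0 < y := lt_of_lt_of_le hx hxy
  have hxy1 : (1:ℝ) ≤ x * y := by nlinarith
  rw [div_le_div_iff₀ (by positivity) (by positivity)]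
  nlinarith [mul_nonneg (sub_nonneg.mpr hxy) (sub_nonneg.mpr hxy1)]

lemma young_scalar {ν s h' : ℝ} (hν0 : 0 ≤ ν) (hν1 : ν ≤ 1) (hh' : 1 ≤ h') (hs : h' ≤ s) :
    Kc h' ^ (min ν (1 - ν)) * s ^ ν ≤ (1 - ν) + ν * s := by
  have hs1 : (1:ℝ) ≤ s := le_trans hh' hs
  have hs0 : (0:ℝ) < s := lt_of_lt_of_le one_pos hs1
  have hKh' : 0 < Kc h' := Kc_pos (lt_of_lt_of_le one_pos hh')
  have hKs : 0 < Kc s := Kc_pos hs0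
  have hKmono : Kc h' ≤ Kc s := Kc_mono hh' hs
  rcases le_total ν (1 - ν) with hmin | hmin
  · rw [min_eq_left hmin]
    have hν2 : 2 * ν ≤ 1 := by linarith
    calc Kc h' ^ ν * s ^ ν
        ≤ Kc s ^ ν * s ^ ν :=
          mul_le_mul_of_nonneg_right (Real.rpow_le_rpow hKh'.le hKmono hν0)
            (Real.rpow_nonneg hs0.le ν)
      _ = (Kc s * s) ^ ν := (Real.mul_rpow hKs.le hs0.le).symm
      _ = (((s+1)/2) ^ (2:ℕ)) ^ ν := by
          congr 1
          unfold Kc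
          field_simp
          ring
      _ = ((s+1)/2) ^ (2 * ν) := by
          rw [← Real.rpow_natCast ((s+1)/2) 2, ← Real.rpow_mul (by positivity)]
          norm_num
      _ = (1 + (s-1)/2) ^ (2 * ν) := by
          have : (s+1)/2 = 1 + (s-1)/2 := by ring
          rw [this]
      _ ≤ 1 + (2 * ν) * ((s-1)/2) :=
          rpow_one_add_le_one_add_mul_self (by linarith) (by linarith) hν2
      _ = (1 - ν) + ν * s := by ring
  · rw [min_eq_right hmin]
    set u : ℝ := (s + 1) / (2 * s) with hu
    have hu0 : 0 < u := by positivity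
    have hKu : Kc s = u ^ (2:ℕ) * s := by
      unfold Kc; rw [hu]; field_simp; ring
    have h1ν : 0 ≤ 1 - ν := by linarith
    have hx1 : (-1:ℝ) ≤ (1-s)/(2*s) := by
      rw [le_div_iff₀ (by positivity)]
      linarith
    calc Kc h' ^ (1-ν) * s ^ ν
        ≤ Kc s ^ (1-ν) * s ^ ν :=
          mul_le_mul_of_nonneg_right (Real.rpow_le_rpow hKh'.le hKmono h1ν)
            (Real.rpow_nonneg hs0.le ν)
      _ = (u ^ (2:ℕ)) ^ (1-ν) * s ^ (1-ν) * s ^ ν := by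
          rw [hKu, Real.mul_rpow (by positivity) hs0.le]
      _ = u ^ (2 * (1-ν)) * s := by
          rw [← Real.rpow_natCast u 2, ← Real.rpow_mul hu0.le,
            mul_assoc, ← Real.rpow_add hs0]
          norm_num
      _ = (1 + (1-s)/(2*s)) ^ (2 * (1-ν)) * s := by
          have : u = 1 + (1-s)/(2*s) := by rw [hu]; field_simp; ring
          rw [this]
      _ ≤ (1 + (2 * (1-ν)) * ((1-s)/(2*s))) * s := by
          refine mul_le_mul_of_nonneg_right ?_ hs0.le
          exact rpow_one_add_le_one_add_mul_self hx1 (by linarith) (by linarith)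
      _ = (1 - ν) + ν * s := by field_simp; ring

end ScalarLemmas

section OperatorLemmas

variable {A : Type*} [CStarAlgebra A] [PartialOrder A] [StarOrderedRing A]

lemma smul_le_smul_left' {x y : A} (h : x ≤ y) {r : ℝ} (hr : 0 ≤ r) : r • x ≤ r • y := by
  rw [← sub_nonneg, ← smul_sub]
  exact smul_nonneg hr (sub_nonneg.mpr h)

lemma one_nonneg' : (0 : A) ≤ 1 := by simpa using star_mul_self_nonneg (1 : A)

lemma smul_one_le_of_one_le {x : A} {r : ℝ} (hr : 0 < r) (h : 1 ≤ r • x) :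
    r⁻¹ • (1:A) ≤ x := by
  have := smul_le_smul_left' h (le_of_lt (inv_pos.mpr hr))
  rwa [smul_smul, inv_mul_cancel₀ hr.ne', one_smul] at this

lemma le_smul_one_of_le_one {x : A} {r : ℝ} (hr : 0 < r) (h : r • x ≤ 1) :
    x ≤ r⁻¹ • (1:A) := by
  have := smul_le_smul_left' h (le_of_lt (inv_pos.mpr hr))
  rwa [smul_smul, inv_mul_cancel₀ hr.ne', one_smul] at this

omit [PartialOrder A] [StarOrderedRing A] in
lemma isUnit_smul_one {r : ℝ} (hr : r ≠ 0) : IsUnit (r • (1:A)) := by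
  rw [← Algebra.algebraMap_eq_smul_one]
  exact (IsUnit.mk0 r hr).map (algebraMap ℝ A)

lemma isUnit_of_smul_one_le {x : A} {r : ℝ} (hr : 0 < r) (h : r • (1:A) ≤ x) : IsUnit x := by
  refine CStarAlgebra.isUnit_of_le (r • (1:A)) h ((isUnit_smul_one hr.ne').isStrictlyPositive ?_)
  exact smul_nonneg hr.le one_nonneg'

/-- Key lemma (order-theoretic Bhatia–Kittaneh): if `0 ≤ u`, `0 ≤ v` and `u + v ≤ L•1`,
then `u * (v * v) * u ≤ (L^4/16) • 1`. -/
lemma key_bk {u v : A} {L : ℝ} (hL : 0 ≤ L) (hu : 0 ≤ u) (hv : 0 ≤ v)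
    (huv : u + v ≤ L • (1:A)) : u * (v * v) * u ≤ (L^4/16) • (1:A) := by
  have hvsa : IsSelfAdjoint v := .of_nonneg hv
  have husa : IsSelfAdjoint u := .of_nonneg hu
  have hspec : ∀ t ∈ spectrum ℝ v, 0 ≤ t := fun t ht => spectrum_nonneg_of_nonneg hv ht
  set f : ℝ → ℝ := fun t => Real.sqrt (L^2/4 + t^2) with hf
  have hf_cont : Continuous f := by fun_prop
  set C : A := cfc f v with hC
  have hC_sa : IsSelfAdjoint C := cfc_predicate f v
  have hCC : C * C = (L^2/4) • (1:A) + v * v := by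
    rw [hC, ← cfc_mul f f v]
    have h1 : cfc (fun t => f t * f t) v = cfc (fun t : ℝ => L^2/4 + t * t) v := by
      apply cfc_congr
      intro t _
      simp only [hf]
      rw [Real.mul_self_sqrt (by positivity)]
      ring
    rw [h1, cfc_add (a := v) (fun t : ℝ => L^2/4) (fun t : ℝ => t * t),
      cfc_const (L^2/4) v, cfc_mul (fun t : ℝ => t) (fun t : ℝ => t) v,
      cfc_id' ℝ v, Algebra.algebraMap_eq_smul_one]
  have hu_le : u ≤ L • (1:A) - v := by
    rw [le_sub_iff_add_le]
    exact huv
  have step1 : C * u * C ≤ (L^3/4) • (1:A) := by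
    have h2 : C * u * C ≤ C * (L • (1:A) - v) * C :=
      hC_sa.conjugate_le_conjugate hu_le
    have h3 : C * (L • (1:A) - v) * C = cfc (fun t : ℝ => f t * ((L - t) * f t)) v := by
      have hLv : L • (1:A) - v = cfc (fun t : ℝ => L - t) v := by
        rw [cfc_sub (fun _ : ℝ => L) (fun t : ℝ => t) v, cfc_const L v, cfc_id' ℝ v,
          Algebra.algebraMap_eq_smul_one]
      rw [hLv, hC, mul_assoc, ← cfc_mul _ _ v, ← cfc_mul _ _ v]
    have h4 : cfc (fun t : ℝ => f t * ((L - t) * f t)) v ≤ (L^3/4) • (1:A) := by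
      rw [← Algebra.algebraMap_eq_smul_one]
      rw [cfc_le_algebraMap_iff (fun t : ℝ => f t * ((L - t) * f t)) (L^3/4) v]
      intro t ht
      have ht0 : 0 ≤ t := hspec t ht
      have hff : f t * f t = L^2/4 + t^2 := by
        simp only [hf]
        exact Real.mul_self_sqrt (by positivity)
      have : f t * ((L - t) * f t) = (L^2/4 + t^2) * (L - t) := by
        rw [← hff]; ring
      rw [this]
      nlinarith [mul_nonneg ht0 (sq_nonneg (t - L/2))]
    calc C * u * C ≤ C * (L • (1:A) - v) * C := h2
      _ = _ := h3
      _ ≤ _ := h4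
  set su : A := CFC.sqrt u with hsu
  have hsus : su * su = u := CFC.sqrt_mul_sqrt_self u hu
  have hsu_sa : IsSelfAdjoint su := .of_nonneg (CFC.sqrt_nonneg u)
  set T : A := su * C with hT
  have hTstar : star T = C * su := by
    rw [hT, star_mul, hC_sa.star_eq, hsu_sa.star_eq]
  have hTT : star T * T = C * u * C := by
    rw [hTstar, hT]
    calc C * su * (su * C) = C * (su * su) * C := by noncomm_ring
      _ = C * u * C := by rw [hsus]
  have hnorm : ‖star T * T‖ ≤ L^3/4 := by
    rw [CStarAlgebra.norm_le_iff_le_algebraMap _ (by positivity) (star_mul_self_nonneg T),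
      Algebra.algebraMap_eq_smul_one]
    rw [hTT]; exact step1
  have hTTstar : T * star T ≤ (L^3/4) • (1:A) := by
    calc T * star T ≤ algebraMap ℝ A ‖T * star T‖ :=
          IsSelfAdjoint.le_algebraMap_norm_self (IsSelfAdjoint.mul_star_self T)
      _ = ‖T * star T‖ • (1:A) := Algebra.algebraMap_eq_smul_one _
      _ ≤ (L^3/4) • (1:A) := by
          have heq : ‖T * star T‖ = ‖star T * T‖ := by
            rw [CStarRing.norm_self_mul_star, CStarRing.norm_star_mul_self]
          rw [heq]
          rw [← sub_nonneg, ← sub_smul]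
          exact smul_nonneg (by linarith [hnorm]) one_nonneg'
  have hTTstar_eq : T * star T = (L^2/4) • u + su * (v * v) * su := by
    rw [hT, hTstar]
    calc su * C * (C * su) = su * (C * C) * su := by noncomm_ring
      _ = su * ((L^2/4) • (1:A) + v * v) * su := by rw [hCC]
      _ = (L^2/4) • (su * su) + su * (v * v) * su := by
          simp [mul_add, add_mul, mul_smul_comm, smul_mul_assoc]
      _ = (L^2/4) • u + su * (v * v) * su := by rw [hsus]
  have step2 : su * (v * v) * su ≤ (L^3/4) • (1:A) - (L^2/4) • u := by
    rw [le_sub_iff_add_le, add_comm, ← hTTstar_eq]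
    exact hTTstar
  have step3 : u * (v * v) * u ≤ (L^3/4) • u - (L^2/4) • (u * u) := by
    have h5 : su * (su * (v * v) * su) * su ≤ su * ((L^3/4) • (1:A) - (L^2/4) • u) * su :=
      hsu_sa.conjugate_le_conjugate step2
    have h6 : su * (su * (v * v) * su) * su = u * (v * v) * u := by
      calc su * (su * (v * v) * su) * su = (su * su) * (v * v) * (su * su) := by noncomm_ring
        _ = u * (v * v) * u := by rw [hsus]
    have h7 : su * ((L^3/4) • (1:A) - (L^2/4) • u) * su
        = (L^3/4) • u - (L^2/4) • (u * u) := by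
      have h8 : su * u * su = u * u := by
        calc su * u * su = su * (su * su) * su := by rw [hsus]
          _ = (su * su) * (su * su) := by noncomm_ring
          _ = u * u := by rw [hsus]
      calc su * ((L^3/4) • (1:A) - (L^2/4) • u) * su
          = (L^3/4) • (su * su) - (L^2/4) • (su * u * su) := by
            simp [mul_sub, sub_mul, mul_smul_comm, smul_mul_assoc, mul_assoc]
        _ = (L^3/4) • u - (L^2/4) • (u * u) := by rw [hsus, h8]
    rw [← h6, ← h7]
    exact h5
  have step4 : (L^3/4) • u - (L^2/4) • (u * u) ≤ (L^4/16) • (1:A) := by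
    rw [← sub_nonneg]
    have hid : (L^4/16) • (1:A) - ((L^3/4) • u - (L^2/4) • (u * u))
        = (L^2/4) • (((L/2) • (1:A) - u) * ((L/2) • (1:A) - u)) := by
      simp only [mul_sub, sub_mul, smul_mul_assoc, mul_smul_comm, smul_smul, mul_one, one_mul,
        smul_sub, sub_smul]
      module
    rw [hid]
    refine smul_nonneg (by positivity) ?_
    have hsq_sa : IsSelfAdjoint ((L/2) • (1:A) - u) := by
      have h1sa : IsSelfAdjoint ((L/2) • (1:A)) := by
        rw [← Algebra.algebraMap_eq_smul_one]
        exact IsSelfAdjoint.algebraMap A (star_trivial _)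
      exact h1sa.sub husa
    calc (0:A) ≤ star ((L/2) • (1:A) - u) * ((L/2) • (1:A) - u) := star_mul_self_nonneg _
      _ = _ := by rw [hsq_sa.star_eq]
  exact le_trans step3 step4

end OperatorLemmas

section MainCore

variable {A : Type*} [CStarAlgebra A] [PartialOrder A] [StarOrderedRing A]

set_option maxHeartbeats 2000000 in
lemma main_core (a b : A) (m mp Mp M ν : ℝ)
    (hm : 0 < m) (hmmp : m ≤ mp) (hmpMp : mp < Mp) (hMpM : Mp ≤ M)
    (ha1 : Mp • (1:A) ≤ a) (ha2 : a ≤ M • (1:A))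
    (hb1 : m • (1:A) ≤ b) (hb2 : b ≤ mp • (1:A))
    (hν0 : 0 ≤ ν) (hν1 : ν ≤ 1) :
    ((1 - ν) • a + ν • b) ^ 2 ≤
      ((Kc (M / m) / Kc (Mp / mp) ^ (min ν (1 - ν))) ^ 2) • (sharp ν a b) ^ 2 := by
  -- scalar facts
  have hmp : 0 < mp := lt_of_lt_of_le hm hmmp
  have hMp : 0 < Mp := lt_trans hmp hmpMp
  have hM : 0 < M := lt_of_lt_of_le hMp hMpM
  have hmM : m < M := lt_of_le_of_lt hmmp (lt_of_lt_of_le hmpMp hMpM)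
  have hmMp : m < Mp := lt_of_le_of_lt hmmp hmpMp
  have hmpM : mp < M := lt_of_lt_of_le hmpMp hMpM
  set r : ℝ := min ν (1 - ν) with hrdef
  set Kr : ℝ := Kc (Mp / mp) ^ r with hKrdef
  have hKcMpmp : 0 < Kc (Mp / mp) := Kc_pos (by positivity)
  have hKr0 : 0 < Kr := Real.rpow_pos_of_pos hKcMpmp r
  -- element positivity and units
  have ha0 : 0 ≤ a := le_trans (smul_nonneg hMp.le one_nonneg') ha1
  have hb0 : 0 ≤ b := le_trans (smul_nonneg hm.le one_nonneg') hb1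
  have ha_sa : IsSelfAdjoint a := .of_nonneg ha0
  have hb_sa : IsSelfAdjoint b := .of_nonneg hb0
  have haU : IsUnit a := isUnit_of_smul_one_le hMp ha1
  have hbU : IsUnit b := isUnit_of_smul_one_le hm hb1
  have haS : (0:ℝ≥0) ∉ spectrum ℝ≥0 a := spectrum.zero_notMem ℝ≥0 haU
  have hbS : (0:ℝ≥0) ∉ spectrum ℝ≥0 b := spectrum.zero_notMem ℝ≥0 hbU
  -- square roots of a
  set p : A := CFC.rpow a (1/2 : ℝ) with hpdef
  set q : A := CFC.rpow a (-(1/2) : ℝ) with hqdef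
  have hp0 : 0 ≤ p := CFC.rpow_nonneg
  have hq0 : 0 ≤ q := CFC.rpow_nonneg
  have hp_sa : IsSelfAdjoint p := .of_nonneg hp0
  have hq_sa : IsSelfAdjoint q := .of_nonneg hq0
  have hpq : p * q = 1 := CFC.rpow_mul_rpow_neg (1/2) (haU.isStrictlyPositive ha0)
  have hqp : q * p = 1 := CFC.rpow_neg_mul_rpow (1/2) (haU.isStrictlyPositive ha0)
  have hqaq : q * a * q = 1 := CFC.conjugate_rpow_neg_one_half a (haU.isStrictlyPositive ha0)
  -- inverse of a
  set ai : A := CFC.rpow a (-1 : ℝ) with haidef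
  have hai0 : 0 ≤ ai := CFC.rpow_nonneg
  have hqq : q * q = ai := by
    rw [hqdef, haidef]
    have := (CFC.rpow_add (x := -(1/2)) (y := -(1/2)) haU).symm
    rw [show (-(1/2) + -(1/2) : ℝ) = (-1 : ℝ) by norm_num] at this
    exact this
  -- bounds on ai
  have hai_ub : ai ≤ Mp⁻¹ • (1:A) := by
    refine le_smul_one_of_le_one hMp ?_
    calc Mp • ai = q * (Mp • (1:A)) * q := by
          rw [mul_smul_comm, smul_mul_assoc, mul_one, hqq]
      _ ≤ q * a * q := hq_sa.conjugate_le_conjugate ha1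
      _ = 1 := hqaq
  have hai_lb : M⁻¹ • (1:A) ≤ ai := by
    refine smul_one_le_of_one_le hM ?_
    calc (1:A) = q * a * q := hqaq.symm
      _ ≤ q * (M • (1:A)) * q := hq_sa.conjugate_le_conjugate ha2
      _ = M • ai := by rw [mul_smul_comm, smul_mul_assoc, mul_one, hqq]
  -- inverse of b
  set bi : A := CFC.rpow b (-1 : ℝ) with hbidef
  have hbi0 : 0 ≤ bi := CFC.rpow_nonneg
  have hbbi : b * bi = 1 := by
    have := CFC.rpow_mul_rpow_neg 1 (hbU.isStrictlyPositive hb0)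
    rwa [CFC.rpow_one b hb0] at this
  have hbib : bi * b = 1 := by
    have := CFC.rpow_neg_mul_rpow 1 (hbU.isStrictlyPositive hb0)
    rwa [CFC.rpow_one b hb0] at this
  -- Z
  set Z : A := q * b * q with hZdef
  have hZ0 : 0 ≤ Z := hq_sa.conjugate_nonneg hb0
  have hZ_ub : Z ≤ (mp / Mp) • (1:A) := by
    calc Z ≤ q * (mp • (1:A)) * q := hq_sa.conjugate_le_conjugate hb2
      _ = mp • ai := by rw [mul_smul_comm, smul_mul_assoc, mul_one, hqq]
      _ ≤ mp • (Mp⁻¹ • (1:A)) := smul_le_smul_left' hai_ub hmp.le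
      _ = (mp / Mp) • (1:A) := by rw [smul_smul, div_eq_mul_inv]
  have hZ_lb : (m / M) • (1:A) ≤ Z := by
    calc (m / M) • (1:A) = m • (M⁻¹ • (1:A)) := by rw [smul_smul, div_eq_mul_inv]
      _ ≤ m • ai := smul_le_smul_left' hai_lb hm.le
      _ = q * (m • (1:A)) * q := by rw [mul_smul_comm, smul_mul_assoc, mul_one, hqq]
      _ ≤ Z := hq_sa.conjugate_le_conjugate hb1
  have hZU : IsUnit Z := isUnit_of_smul_one_le (by positivity) hZ_lb
  have hZS : (0:ℝ≥0) ∉ spectrum ℝ≥0 Z := spectrum.zero_notMem ℝ≥0 hZU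
  have hZ_sa : IsSelfAdjoint Z := .of_nonneg hZ0
  -- real spectrum bounds for Z
  have hZspec : ∀ t ∈ spectrum ℝ Z, m / M ≤ t ∧ t ≤ mp / Mp := by
    intro t ht
    constructor
    · have h := (algebraMap_le_iff_le_spectrum (R := ℝ) (r := m / M) (a := Z) hZ_sa).mp
        (by rwa [Algebra.algebraMap_eq_smul_one])
      exact h t ht
    · have h := (le_algebraMap_iff_spectrum_le (R := ℝ) (r := mp / Mp) (a := Z) hZ_sa).mp
        (by rwa [Algebra.algebraMap_eq_smul_one])
      exact h t ht
  have hZspec_pos : ∀ t ∈ spectrum ℝ Z, 0 < t := by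
    intro t ht
    exact lt_of_lt_of_le (by positivity) (hZspec t ht).1
  -- rpow of Z
  set Zν : A := CFC.rpow Z ν with hZνdef
  set Zmν : A := CFC.rpow Z (-ν) with hZmνdef
  have hZν0 : 0 ≤ Zν := CFC.rpow_nonneg
  have hZmν0 : 0 ≤ Zmν := CFC.rpow_nonneg
  have hZν_sa : IsSelfAdjoint Zν := .of_nonneg hZν0
  have hZνmν : Zν * Zmν = 1 := CFC.rpow_mul_rpow_neg ν (hZU.isStrictlyPositive hZ0)
  have hZmνν : Zmν * Zν = 1 := CFC.rpow_neg_mul_rpow ν (hZU.isStrictlyPositive hZ0)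
  set Zi : A := CFC.rpow Z (-1 : ℝ) with hZidef
  have hZi0 : 0 ≤ Zi := CFC.rpow_nonneg
  have hZZi : Z * Zi = 1 := by
    have := CFC.rpow_mul_rpow_neg 1 (hZU.isStrictlyPositive hZ0)
    rwa [CFC.rpow_one Z hZ0] at this
  have hZiZ : Zi * Z = 1 := by
    have := CFC.rpow_neg_mul_rpow 1 (hZU.isStrictlyPositive hZ0)
    rwa [CFC.rpow_one Z hZ0] at this
  -- Y and Q
  set Y : A := p * Zν * p with hYdef
  have hY_sharp : sharp ν a b = Y := rfl
  have hY_sa : IsSelfAdjoint Y := by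
    rw [hYdef, IsSelfAdjoint, star_mul, star_mul, hp_sa.star_eq, hZν_sa.star_eq, mul_assoc]
  set Q : A := q * Zmν * q with hQdef
  have hQ0 : 0 ≤ Q := hq_sa.conjugate_nonneg hZmν0
  have hbZ : p * Z * p = b := by
    rw [hZdef]
    calc p * (q * b * q) * p = (p * q) * b * (q * p) := by noncomm_ring
      _ = b := by rw [hpq, hqp, one_mul, mul_one]
  have hYQ : Y * Q = 1 := by
    rw [hYdef, hQdef]
    calc (p * Zν * p) * (q * Zmν * q) = p * Zν * (p * q) * Zmν * q := by noncomm_ring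
      _ = p * (Zν * Zmν) * q := by rw [hpq]; noncomm_ring
      _ = 1 := by rw [hZνmν, mul_one, hpq]
  have hQY : Q * Y = 1 := by
    rw [hYdef, hQdef]
    calc (q * Zmν * q) * (p * Zν * p) = q * Zmν * (q * p) * Zν * p := by noncomm_ring
      _ = q * (Zmν * Zν) * p := by rw [hqp]; noncomm_ring
      _ = 1 := by rw [hZmνν, mul_one, hqp]
  -- q * Zi * q = bi
  have hqZiq : q * Zi * q = bi := by
    have h1 : (q * Zi * q) * b = 1 := by
      rw [← hbZ]
      calc (q * Zi * q) * (p * Z * p) = q * Zi * (q * p) * Z * p := by noncomm_ring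
        _ = q * (Zi * Z) * p := by rw [hqp]; noncomm_ring
        _ = 1 := by rw [hZiZ, mul_one, hqp]
    calc q * Zi * q = (q * Zi * q) * (b * bi) := by rw [hbbi, mul_one]
      _ = ((q * Zi * q) * b) * bi := (mul_assoc _ b bi).symm
      _ = bi := by rw [h1, one_mul]
  -- real-cfc representations of rpow of Z
  have hrpow_eq : ∀ y : ℝ, CFC.rpow Z y = cfc (fun t : ℝ => t ^ y) Z := by
    intro y
    rw [show CFC.rpow Z y = cfc (fun x : ℝ≥0 => x ^ y) Z from rfl, cfc_nnreal_eq_real _ Z hZ0]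
    apply cfc_congr
    intro t ht
    have ht0 : 0 < t := hZspec_pos t ht
    show ((Real.toNNReal t ^ y : ℝ≥0) : ℝ) = t ^ y
    rw [NNReal.coe_rpow, Real.coe_toNNReal t ht0.le]
  have hZspec_ne : ∀ t ∈ spectrum ℝ Z, t ≠ 0 := fun t ht => (hZspec_pos t ht).ne'
  have hcont_inv : ContinuousOn (fun t : ℝ => t⁻¹) (spectrum ℝ Z) :=
    ContinuousOn.inv₀ continuousOn_id hZspec_ne
  have hcont_rpow : ContinuousOn (fun t : ℝ => t ^ (-ν)) (spectrum ℝ Z) := by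
    intro t ht
    exact (Real.continuousAt_rpow_const t (-ν) (Or.inl (hZspec_ne t ht))).continuousWithinAt
  have hZmν_eq : Zmν = cfc (fun t : ℝ => t ^ (-ν)) Z := by rw [hZmνdef, hrpow_eq (-ν)]
  have hZi_eq : Zi = cfc (fun t : ℝ => t⁻¹) Z := by
    rw [hZidef, hrpow_eq (-1)]
    exact cfc_congr fun t _ => Real.rpow_neg_one t
  -- operator Young inequality
  have young_op : Kr • Zmν ≤ (1 - ν) • (1:A) + ν • Zi := by
    have lhs_eq : Kr • Zmν = cfc (fun t : ℝ => Kr * t ^ (-ν)) Z := by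
      rw [hZmν_eq, cfc_const_mul Kr (fun t : ℝ => t ^ (-ν)) Z hcont_rpow]
    have rhs_eq : (1 - ν) • (1:A) + ν • Zi = cfc (fun t : ℝ => (1 - ν) + ν * t⁻¹) Z := by
      rw [cfc_add (a := Z) (fun _ : ℝ => (1 - ν)) (fun t : ℝ => ν * t⁻¹) (by fun_prop)
        (ContinuousOn.mul continuousOn_const hcont_inv), cfc_const (1 - ν) Z,
        cfc_const_mul ν (fun t : ℝ => t⁻¹) Z hcont_inv, hZi_eq,
        Algebra.algebraMap_eq_smul_one]
    rw [lhs_eq, rhs_eq]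
    refine cfc_mono (fun t ht => ?_) (ContinuousOn.mul continuousOn_const hcont_rpow)
      (ContinuousOn.add continuousOn_const (ContinuousOn.mul continuousOn_const hcont_inv))
    have ht0 : 0 < t := hZspec_pos t ht
    have hts : Mp / mp ≤ t⁻¹ := by
      have h1 : t ≤ mp / Mp := (hZspec t ht).2
      have h2 := one_div_le_one_div_of_le ht0 h1
      rwa [one_div_div, one_div] at h2
    have h1h : (1:ℝ) ≤ Mp / mp := (one_le_div hmp).mpr hmpMp.le
    have hrw : t ^ (-ν) = (t⁻¹) ^ ν := by
      rw [Real.rpow_neg ht0.le, ← Real.inv_rpow ht0.le]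
    calc Kr * t ^ (-ν) = Kc (Mp/mp) ^ r * (t⁻¹) ^ ν := by rw [hrw]
      _ ≤ (1 - ν) + ν * t⁻¹ := young_scalar hν0 hν1 h1h hts
  -- conjugate Young by q
  have young_conj : Kr • Q ≤ (1 - ν) • ai + ν • bi := by
    have h := hq_sa.conjugate_le_conjugate young_op
    have hL : q * (Kr • Zmν) * q = Kr • Q := by
      rw [hQdef, mul_smul_comm, smul_mul_assoc]
    have hR : q * ((1 - ν) • (1:A) + ν • Zi) * q = (1 - ν) • ai + ν • bi := by
      rw [mul_add, add_mul]
      congr 1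
      · rw [mul_smul_comm, smul_mul_assoc, mul_one, hqq]
      · rw [mul_smul_comm, smul_mul_assoc, hqZiq]
    rwa [hL, hR] at h
  -- spectrum bounds for a and b
  have haspec : ∀ t ∈ spectrum ℝ a, Mp ≤ t ∧ t ≤ M := by
    intro t ht
    constructor
    · exact (algebraMap_le_iff_le_spectrum (R := ℝ) (r := Mp) (a := a) ha_sa).mp
        (by rwa [Algebra.algebraMap_eq_smul_one]) t ht
    · exact (le_algebraMap_iff_spectrum_le (R := ℝ) (r := M) (a := a) ha_sa).mp
        (by rwa [Algebra.algebraMap_eq_smul_one]) t ht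
  have haspec_pos : ∀ t ∈ spectrum ℝ a, 0 < t := fun t ht =>
    lt_of_lt_of_le hMp (haspec t ht).1
  have hbspec : ∀ t ∈ spectrum ℝ b, m ≤ t ∧ t ≤ mp := by
    intro t ht
    constructor
    · exact (algebraMap_le_iff_le_spectrum (R := ℝ) (r := m) (a := b) hb_sa).mp
        (by rwa [Algebra.algebraMap_eq_smul_one]) t ht
    · exact (le_algebraMap_iff_spectrum_le (R := ℝ) (r := mp) (a := b) hb_sa).mp
        (by rwa [Algebra.algebraMap_eq_smul_one]) t ht
  have hbspec_pos : ∀ t ∈ spectrum ℝ b, 0 < t := fun t ht =>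
    lt_of_lt_of_le hm (hbspec t ht).1
  -- real cfc representation of ai and bi
  have hai_eq : ai = cfc (fun t : ℝ => t⁻¹) a := by
    rw [haidef, show CFC.rpow a (-1 : ℝ) = cfc (fun x : ℝ≥0 => x ^ (-1 : ℝ)) a from rfl,
      cfc_nnreal_eq_real _ a ha0]
    apply cfc_congr
    intro t ht
    have ht0 : 0 < t := haspec_pos t ht
    show ((Real.toNNReal t ^ (-1:ℝ) : ℝ≥0) : ℝ) = t⁻¹
    rw [NNReal.coe_rpow, Real.coe_toNNReal t ht0.le, Real.rpow_neg_one]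
  have hbi_eq : bi = cfc (fun t : ℝ => t⁻¹) b := by
    rw [hbidef, show CFC.rpow b (-1 : ℝ) = cfc (fun x : ℝ≥0 => x ^ (-1 : ℝ)) b from rfl,
      cfc_nnreal_eq_real _ b hb0]
    apply cfc_congr
    intro t ht
    have ht0 : 0 < t := hbspec_pos t ht
    show ((Real.toNNReal t ^ (-1:ℝ) : ℝ≥0) : ℝ) = t⁻¹
    rw [NNReal.coe_rpow, Real.coe_toNNReal t ht0.le, Real.rpow_neg_one]
  -- the arithmetic-harmonic bound for a and b
  have haai_le : a + (M*m) • ai ≤ (M+m) • (1:A) := by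
    have hconta : ContinuousOn (fun t : ℝ => t⁻¹) (spectrum ℝ a) :=
      ContinuousOn.inv₀ continuousOn_id (fun t ht => (haspec_pos t ht).ne')
    have heq : a + (M*m) • ai = cfc (fun t : ℝ => t + (M*m) * t⁻¹) a := by
      rw [cfc_add (a := a) (fun t : ℝ => t) (fun t : ℝ => (M*m) * t⁻¹) (by fun_prop)
        (ContinuousOn.mul continuousOn_const hconta), cfc_id' ℝ a,
        cfc_const_mul (M*m) (fun t : ℝ => t⁻¹) a hconta, hai_eq]
    rw [heq, ← Algebra.algebraMap_eq_smul_one]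
    refine (cfc_le_algebraMap_iff _ _ _ (ContinuousOn.add continuousOn_id
      (ContinuousOn.mul continuousOn_const hconta))).mpr ?_
    intro t ht
    show t + (M*m) * t⁻¹ ≤ M + m
    have ht0 : 0 < t := haspec_pos t ht
    have h1 : m ≤ t := le_trans (le_of_lt hmMp) (haspec t ht).1
    have h2 : t ≤ M := (haspec t ht).2
    have key : (M + m) - (t + (M*m) * t⁻¹) = t⁻¹ * ((t - m) * (M - t)) := by
      field_simp
      ring
    have pos : 0 ≤ t⁻¹ * ((t - m) * (M - t)) := mul_nonneg (inv_nonneg.mpr ht0.le)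
      (mul_nonneg (sub_nonneg.mpr h1) (sub_nonneg.mpr h2))
    linarith [key, pos]
  have hbbi_le : b + (M*m) • bi ≤ (M+m) • (1:A) := by
    have hcontb : ContinuousOn (fun t : ℝ => t⁻¹) (spectrum ℝ b) :=
      ContinuousOn.inv₀ continuousOn_id (fun t ht => (hbspec_pos t ht).ne')
    have heq : b + (M*m) • bi = cfc (fun t : ℝ => t + (M*m) * t⁻¹) b := by
      rw [cfc_add (a := b) (fun t : ℝ => t) (fun t : ℝ => (M*m) * t⁻¹) (by fun_prop)
        (ContinuousOn.mul continuousOn_const hcontb), cfc_id' ℝ b,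
        cfc_const_mul (M*m) (fun t : ℝ => t⁻¹) b hcontb, hbi_eq]
    rw [heq, ← Algebra.algebraMap_eq_smul_one]
    refine (cfc_le_algebraMap_iff _ _ _ (ContinuousOn.add continuousOn_id
      (ContinuousOn.mul continuousOn_const hcontb))).mpr ?_
    intro t ht
    show t + (M*m) * t⁻¹ ≤ M + m
    have ht0 : 0 < t := hbspec_pos t ht
    have h1 : m ≤ t := (hbspec t ht).1
    have h2 : t ≤ M := le_trans (hbspec t ht).2 (le_of_lt hmpM)
    have key : (M + m) - (t + (M*m) * t⁻¹) = t⁻¹ * ((t - m) * (M - t)) := by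
      field_simp
      ring
    have pos : 0 ≤ t⁻¹ * ((t - m) * (M - t)) := mul_nonneg (inv_nonneg.mpr ht0.le)
      (mul_nonneg (sub_nonneg.mpr h1) (sub_nonneg.mpr h2))
    linarith [key, pos]
  -- assemble the Lin-type bound
  set X : A := (1 - ν) • a + ν • b with hXdef
  have hX0 : 0 ≤ X := add_nonneg (smul_nonneg (by linarith) ha0) (smul_nonneg hν0 hb0)
  set c : ℝ := M * m * Kr with hcdef
  have hc0 : 0 < c := by
    have := hKr0
    positivity
  have hE : X + c • Q ≤ (M + m) • (1:A) := by
    have h1 : c • Q = (M*m) • (Kr • Q) := by rw [smul_smul, hcdef]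
    have h2 : (M*m) • (Kr • Q) ≤ (M*m) • ((1-ν) • ai + ν • bi) :=
      smul_le_smul_left' young_conj (by positivity)
    have h3 : X + (M*m) • ((1-ν) • ai + ν • bi)
        = (1-ν) • (a + (M*m) • ai) + ν • (b + (M*m) • bi) := by
      rw [hXdef]
      module
    have h4 : ((1:ℝ) - ν) + ν = 1 := by ring
    calc X + c • Q ≤ X + (M*m) • ((1-ν) • ai + ν • bi) := by
          rw [h1]; exact add_le_add le_rfl h2
      _ = (1-ν) • (a + (M*m) • ai) + ν • (b + (M*m) • bi) := h3
      _ ≤ (1-ν) • ((M+m) • (1:A)) + ν • ((M+m) • (1:A)) :=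
          add_le_add (smul_le_smul_left' haai_le (by linarith))
            (smul_le_smul_left' hbbi_le hν0)
      _ = (M+m) • (1:A) := by rw [← add_smul, h4, one_smul]
  have hV0 : (0:A) ≤ c • Q := smul_nonneg hc0.le hQ0
  have hkey : (c • Q) * (X * X) * (c • Q) ≤ (((M+m))^4/16) • (1:A) :=
    key_bk (by linarith : (0:ℝ) ≤ M + m) hV0 hX0 (by rwa [add_comm] at hE)
  have hVXV : (c • Q) * (X * X) * (c • Q) = (c*c) • (Q * (X*X) * Q) := by
    rw [smul_mul_assoc, smul_mul_assoc, mul_smul_comm, smul_smul]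
  have hQXQ : Q * (X*X) * Q ≤ ((M+m)^4/(16*c^2)) • (1:A) := by
    have h4 : (c*c) • (Q * (X*X) * Q) ≤ ((M+m)^4/16) • (1:A) := by
      rw [← hVXV]; exact hkey
    have hcc : (0:ℝ) < c * c := by positivity
    have h5 := smul_le_smul_left' h4 (le_of_lt (inv_pos.mpr hcc))
    rw [smul_smul, smul_smul, inv_mul_cancel₀ hcc.ne', one_smul] at h5
    have h6 : (c*c)⁻¹ * ((M+m)^4/16) = (M+m)^4/(16*c^2) := by
      field_simp
    rwa [h6] at h5
  have hXX : X * X = Y * (Q * (X*X) * Q) * Y := by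
    calc X * X = (Y * Q) * (X * X) * (Q * Y) := by rw [hYQ, hQY, one_mul, mul_one]
      _ = Y * (Q * (X*X) * Q) * Y := by noncomm_ring
  have hfinal : X * X ≤ ((M+m)^4/(16*c^2)) • (Y * Y) := by
    rw [hXX]
    calc Y * (Q * (X*X) * Q) * Y ≤ Y * (((M+m)^4/(16*c^2)) • (1:A)) * Y :=
          hY_sa.conjugate_le_conjugate hQXQ
      _ = ((M+m)^4/(16*c^2)) • (Y * Y) := by
          rw [mul_smul_comm, smul_mul_assoc, mul_one]
  have hscal : (Kc (M / m) / Kr) ^ 2 = (M+m)^4/(16*c^2) := by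
    have hKcMm : Kc (M/m) = (M+m)^2/(4*(M*m)) := by
      unfold Kc
      rw [div_eq_div_iff (by positivity) (by positivity)]
      field_simp
    rw [hKcMm, hcdef]
    have hKrne : Kr ≠ 0 := hKr0.ne'
    field_simp
    ring
  rw [hY_sharp, hscal, pow_two X, pow_two Y]
  exact hfinal

end MainCore


theorem stmt10 {𝒜 ℬ : Type*} [CStarAlgebra 𝒜] [PartialOrder 𝒜] [StarOrderedRing 𝒜]
    [CStarAlgebra ℬ] [PartialOrder ℬ] [StarOrderedRing ℬ]
    (Φ : 𝒜 →ₗ[ℂ] ℬ) (hΦ : ∀ a : 𝒜, 0 ≤ a → 0 ≤ Φ a) (hΦ1 : Φ 1 = 1)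
    (A B : 𝒜) (m mp Mp M ν : ℝ)
    (hm : 0 < m) (hmB : m • (1:𝒜) ≤ B) (hBmp : B ≤ mp • (1:𝒜)) (hmpMp : mp < Mp)
    (hMpA : Mp • (1:𝒜) ≤ A) (hAM : A ≤ M • (1:𝒜)) (hν : ν ∈ Set.Icc (0:ℝ) 1) :
    (Φ ((1 - ν) • A + ν • B)) ^ 2 ≤
      ((Kc (M / m) / Kc (Mp / mp) ^ (min ν (1 - ν))) ^ 2) • (sharp ν (Φ A) (Φ B)) ^ 2 := by
  obtain ⟨hν0, hν1⟩ := hν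
  by_cases hns : Subsingleton ℬ
  · exact le_of_eq (Subsingleton.elim _ _)
  have hnt : Nontrivial ℬ := not_subsingleton_iff_nontrivial.mp hns
  have hAnt : Nontrivial 𝒜 := by
    by_contra h
    have hsub : Subsingleton 𝒜 := not_nontrivial_iff_subsingleton.mp h
    have h10 : (1 : 𝒜) = 0 := Subsingleton.elim _ _
    have : (1 : ℬ) = 0 := by rw [← hΦ1, h10, map_zero]
    exact one_ne_zero this
  -- scalar inequalities from operator inequalities
  have smul_le : ∀ {r s : ℝ}, r • (1:𝒜) ≤ s • (1:𝒜) → r ≤ s := by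
    intro r s h
    rw [← Algebra.algebraMap_eq_smul_one, ← Algebra.algebraMap_eq_smul_one] at h
    have h2 := (le_algebraMap_iff_spectrum_le (R := ℝ) (r := s) (a := algebraMap ℝ 𝒜 r)
      (IsSelfAdjoint.algebraMap 𝒜 (star_trivial r))).mp h
    have hr : r ∈ spectrum ℝ (algebraMap ℝ 𝒜 r) := by
      rw [spectrum.scalar_eq]
      exact Set.mem_singleton r
    exact h2 r hr
  have hmmp : m ≤ mp := smul_le (le_trans hmB hBmp)
  have hMpM : Mp ≤ M := smul_le (le_trans hMpA hAM)
  -- Φ is monotone and maps scalars to scalars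
  have hmono : ∀ {x y : 𝒜}, x ≤ y → Φ x ≤ Φ y := by
    intro x y h
    have h2 := hΦ _ (sub_nonneg.mpr h)
    rw [map_sub] at h2
    exact sub_nonneg.mp h2
  have hΦsmul : ∀ (t : ℝ) (x : 𝒜), Φ (t • x) = t • Φ x := fun t x =>
    Φ.map_smul_of_tower t x
  have hΦ1' : ∀ t : ℝ, Φ (t • (1:𝒜)) = t • (1:ℬ) := by
    intro t
    rw [hΦsmul, hΦ1]
  -- transferred bounds
  have ha1 : Mp • (1:ℬ) ≤ Φ A := by rw [← hΦ1']; exact hmono hMpA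
  have ha2 : Φ A ≤ M • (1:ℬ) := by rw [← hΦ1']; exact hmono hAM
  have hb1 : m • (1:ℬ) ≤ Φ B := by rw [← hΦ1']; exact hmono hmB
  have hb2 : Φ B ≤ mp • (1:ℬ) := by rw [← hΦ1']; exact hmono hBmp
  have hXeq : Φ ((1 - ν) • A + ν • B) = (1 - ν) • Φ A + ν • Φ B := by
    rw [map_add, hΦsmul, hΦsmul]
  rw [hXeq]
  exact main_core (Φ A) (Φ B) m mp Mp M ν hm hmmp hmpMp hMpM ha1 ha2 hb1 hb2 hν0 hν1
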